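/- Let S₁ < S₂ be symmetric n×n matrices with U = S₂ − S₁ positive definite, and let 𝒮ᵢ = {(h, Sᵢh)} be their graph Lagrangians in (ℝ²ⁿ, ω). Then the cone C(𝒮₁, 𝒮₂) = {(h, Sh) : S symmetric, S₁ ≤ S ≤ S₂, h ∈ ℝⁿ} equals {v ∈ ℝ²ⁿ : Sg(v) ≥ 0}, where Sg(v) = ω(v₁, v₂) for the (unique) decomposition v = v₁ + v₂ with vᵢ ∈ 𝒮ᵢ. -/

import Mathlib

open Matrix

/-- The standard symplectic form on ℝ²ⁿ = ℝⁿ × ℝⁿ. -/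
def omegaForm {n : ℕ} (u v : (Fin n → ℝ) × (Fin n → ℝ)) : ℝ :=
  v.2 ⬝ᵥ u.1 - u.2 ⬝ᵥ v.1

/-- The cone C(𝒮₁, 𝒮₂) between the graph Lagrangians of S₁ ≤ S₂. -/
def coneBetween {n : ℕ} (S₁ S₂ : Matrix (Fin n) (Fin n) ℝ) :
    Set ((Fin n → ℝ) × (Fin n → ℝ)) :=
  {v | ∃ S : Matrix (Fin n) (Fin n) ℝ, S.IsSymm ∧ (S - S₁).PosSemidef ∧
    (S₂ - S).PosSemidef ∧ v.2 = S *ᵥ v.1}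

private lemma dot_symm {n : ℕ} {M : Matrix (Fin n) (Fin n) ℝ} (hM : Mᵀ = M)
    (x y : Fin n → ℝ) : x ⬝ᵥ (M *ᵥ y) = y ⬝ᵥ (M *ᵥ x) := by
  rw [dotProduct_mulVec, ← mulVec_transpose, hM, dotProduct_comm]

private lemma psd_nonneg {n : ℕ} {M : Matrix (Fin n) (Fin n) ℝ} (hM : M.PosSemidef)
    (x : Fin n → ℝ) : 0 ≤ x ⬝ᵥ (M *ᵥ x) := by simpa using hM.dotProduct_mulVec_nonneg x

private lemma cs_ineq {n : ℕ} {M : Matrix (Fin n) (Fin n) ℝ} (hM : M.PosSemidef)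
    (hMs : Mᵀ = M) (x y : Fin n → ℝ) :
    (x ⬝ᵥ (M *ᵥ y))^2 ≤ (x ⬝ᵥ (M *ᵥ x)) * (y ⬝ᵥ (M *ᵥ y)) := by
  have key : ∀ t : ℝ, 0 ≤ (x ⬝ᵥ (M *ᵥ x)) * (t * t) + (2 * (x ⬝ᵥ (M *ᵥ y))) * t
      + (y ⬝ᵥ (M *ᵥ y)) := by
    intro t
    have h0 := psd_nonneg hM (t • x + y)
    have hsym := dot_symm hMs x y
    simp only [mulVec_add, mulVec_smul, dotProduct_add, add_dotProduct, dotProduct_smul,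
      smul_dotProduct, smul_eq_mul] at h0
    rw [← hsym] at h0
    nlinarith [h0]
  have hd := discrim_le_zero key
  rw [discrim] at hd
  nlinarith [hd]

theorem stmt8 (n : ℕ) (S₁ S₂ : Matrix (Fin n) (Fin n) ℝ)
    (hS₁ : S₁.IsSymm) (hS₂ : S₂.IsSymm) (hU : (S₂ - S₁).PosDef) :
    coneBetween S₁ S₂ =
      {v : (Fin n → ℝ) × (Fin n → ℝ) | ∃ x₁ x₂ : Fin n → ℝ,
        v = (x₁, S₁ *ᵥ x₁) + (x₂, S₂ *ᵥ x₂) ∧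
        0 ≤ omegaForm (x₁, S₁ *ᵥ x₁) (x₂, S₂ *ᵥ x₂)} := by
  set U : Matrix (Fin n) (Fin n) ℝ := S₂ - S₁ with hUdef
  have hUsym : Uᵀ = U := by
    rw [hUdef, transpose_sub, hS₁.eq, hS₂.eq]
  have hUdet : IsUnit U.det := hU.det_pos.ne'.isUnit
  have hUinv : U * U⁻¹ = 1 := mul_nonsing_inv U hUdet
  have hUpsd : U.PosSemidef := hU.posSemidef
  ext v
  constructor
  · rintro ⟨S, hSsym, hA, hB, hv⟩
    obtain ⟨h, y⟩ := v
    simp only at hv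
    set A : Matrix (Fin n) (Fin n) ℝ := S - S₁ with hAdef
    set B : Matrix (Fin n) (Fin n) ℝ := S₂ - S with hBdef
    have hAsym : Aᵀ = A := by rw [hAdef, transpose_sub, hSsym.eq, hS₁.eq]
    have hUAB : U = A + B := by rw [hUdef, hAdef, hBdef]; abel
    set x₂ : Fin n → ℝ := U⁻¹ *ᵥ (A *ᵥ h) with hx₂
    set x₁ : Fin n → ℝ := h - x₂ with hx₁
    have key1 : U *ᵥ x₂ = A *ᵥ h := by
      rw [hx₂, mulVec_mulVec, mulVec_mulVec, hUinv, Matrix.one_mul]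
    have key2 : A *ᵥ x₁ = B *ᵥ x₂ := by
      rw [hx₁, mulVec_sub, ← key1, hUAB, add_mulVec]
      abel
    refine ⟨x₁, x₂, ?_, ?_⟩
    · have h1 : h = x₁ + x₂ := by rw [hx₁]; abel
      have h2 : S₁ *ᵥ x₁ + S₂ *ᵥ x₂ = y := by
        rw [hv, hx₁, mulVec_sub]
        have : S₂ *ᵥ x₂ - S₁ *ᵥ x₂ = U *ᵥ x₂ := by rw [hUdef, sub_mulVec]
        have hAh : A *ᵥ h = S *ᵥ h - S₁ *ᵥ h := by rw [hAdef, sub_mulVec]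
        calc S₁ *ᵥ h - S₁ *ᵥ x₂ + S₂ *ᵥ x₂
            = S₁ *ᵥ h + (S₂ *ᵥ x₂ - S₁ *ᵥ x₂) := by abel
          _ = S₁ *ᵥ h + U *ᵥ x₂ := by rw [this]
          _ = S₁ *ᵥ h + (S *ᵥ h - S₁ *ᵥ h) := by rw [key1, hAh]
          _ = S *ᵥ h := by abel
      rw [Prod.ext_iff]
      constructor
      · simpa using h1
      · simpa using h2.symm
    · have e1 : (S₂ *ᵥ x₂) ⬝ᵥ x₁ = x₁ ⬝ᵥ (S₂ *ᵥ x₂) := dotProduct_comm _ _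
      have e2 : (S₁ *ᵥ x₁) ⬝ᵥ x₂ = x₁ ⬝ᵥ (S₁ *ᵥ x₂) := by
        rw [dotProduct_comm, dot_symm hS₁.eq]
      have e3 : x₁ ⬝ᵥ (S₂ *ᵥ x₂) - x₁ ⬝ᵥ (S₁ *ᵥ x₂) = x₁ ⬝ᵥ (U *ᵥ x₂) := by
        rw [hUdef, sub_mulVec, dotProduct_sub]
      have e4 : x₁ ⬝ᵥ (U *ᵥ x₂) = x₁ ⬝ᵥ (A *ᵥ x₁) + x₁ ⬝ᵥ (A *ᵥ x₂) := by
        rw [key1]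
        have : h = x₁ + x₂ := by rw [hx₁]; abel
        rw [this, mulVec_add, dotProduct_add]
      have e5 : x₁ ⬝ᵥ (A *ᵥ x₂) = x₂ ⬝ᵥ (B *ᵥ x₂) := by
        rw [dot_symm hAsym, key2]
      have hA0 := psd_nonneg hA x₁
      have hB0 := psd_nonneg hB x₂
      simp only [omegaForm]
      rw [e1, e2, e3, e4, e5]
      linarith
  · rintro ⟨x₁, x₂, hv, hSg⟩
    have hSg' : 0 ≤ x₂ ⬝ᵥ (U *ᵥ x₁) := by
      have e1 : (S₂ *ᵥ x₂) ⬝ᵥ x₁ = x₂ ⬝ᵥ (S₂ *ᵥ x₁) := by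
        rw [dotProduct_comm, dot_symm hS₂.eq]
      have e2 : (S₁ *ᵥ x₁) ⬝ᵥ x₂ = x₂ ⬝ᵥ (S₁ *ᵥ x₁) := dotProduct_comm _ _
      have := hSg
      simp only [omegaForm] at this
      rw [e1, e2] at this
      rw [hUdef, sub_mulVec, dotProduct_sub]
      linarith
    by_cases hx₂0 : x₂ = 0
    · refine ⟨S₁, hS₁, ?_, ?_, ?_⟩
      · simpa using Matrix.PosSemidef.zero
      · exact hUpsd
      · rw [hv, hx₂0]
        simp
    · set w : Fin n → ℝ := U *ᵥ x₂ with hw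
      set d : ℝ := x₂ ⬝ᵥ w with hd
      have hdpos : 0 < d := by
        rw [hd, hw]; simpa using hU.dotProduct_mulVec_pos hx₂0
      set t : ℝ := x₂ ⬝ᵥ (U *ᵥ x₁) + d with ht
      have htpos : 0 < t := by rw [ht]; linarith
      set A : Matrix (Fin n) (Fin n) ℝ := t⁻¹ • vecMulVec w w with hAdef
      have hwdot : ∀ x : Fin n → ℝ, w ⬝ᵥ x = x₂ ⬝ᵥ (U *ᵥ x) := by
        intro x
        rw [hw, dotProduct_comm, dot_symm hUsym]
      have hAvec : ∀ x : Fin n → ℝ, A *ᵥ x = (t⁻¹ * (w ⬝ᵥ x)) • w := by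
        intro x
        funext i
        simp [hAdef, mulVec, vecMulVec, dotProduct, Finset.mul_sum, Finset.sum_mul]
        congr 1
        funext j
        ring
      have hAdot : ∀ x y : Fin n → ℝ, x ⬝ᵥ (A *ᵥ y) = t⁻¹ * (w ⬝ᵥ x) * (w ⬝ᵥ y) := by
        intro x y
        rw [hAvec, dotProduct_smul, smul_eq_mul, dotProduct_comm x w]
        ring
      have hAsym : Aᵀ = A := by
        funext i j
        simp [hAdef, vecMulVec, transpose_apply, mul_comm]
      have hAherm : A.IsHermitian := by
        rw [Matrix.IsHermitian, conjTranspose_eq_transpose_of_trivial, hAsym]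
      have hApsd : A.PosSemidef := by
        refine .of_dotProduct_mulVec_nonneg hAherm fun x => ?_
        simp only [star_trivial]
        rw [hAdot]
        have h0 := mul_self_nonneg (w ⬝ᵥ x)
        have h1 : (0:ℝ) ≤ t⁻¹ := inv_nonneg.mpr htpos.le
        nlinarith [h0, h1]
      have hUA : ∀ x : Fin n → ℝ, 0 ≤ x ⬝ᵥ ((U - A) *ᵥ x) := by
        intro x
        rw [sub_mulVec, dotProduct_sub, hAdot, hwdot]
        have hcs := cs_ineq hUpsd hUsym x₂ x
        have hx0 : 0 ≤ x ⬝ᵥ (U *ᵥ x) := psd_nonneg hUpsd x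
        have hdt : d ≤ t := by rw [ht, hd, hw]; linarith
        have h1 : (x₂ ⬝ᵥ (U *ᵥ x))^2 ≤ t * (x ⬝ᵥ (U *ᵥ x)) := by
          calc (x₂ ⬝ᵥ (U *ᵥ x))^2 ≤ (x₂ ⬝ᵥ (U *ᵥ x₂)) * (x ⬝ᵥ (U *ᵥ x)) := hcs
            _ ≤ t * (x ⬝ᵥ (U *ᵥ x)) := by
                have : x₂ ⬝ᵥ (U *ᵥ x₂) = d := by rw [hd, hw]
                rw [this]; nlinarith
        rw [sub_nonneg]
        have h2 : t⁻¹ * (x₂ ⬝ᵥ (U *ᵥ x)) * (x₂ ⬝ᵥ (U *ᵥ x))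
            = t⁻¹ * ((x₂ ⬝ᵥ (U *ᵥ x))^2) := by ring
        rw [h2, inv_mul_le_iff₀ htpos]
        exact h1
      refine ⟨S₁ + A, ?_, ?_, ?_, ?_⟩
      · rw [Matrix.IsSymm, transpose_add, hS₁.eq, hAsym]
      · have : S₁ + A - S₁ = A := by abel
        rw [this]
        exact hApsd
      · have : S₂ - (S₁ + A) = U - A := by rw [hUdef]; abel
        rw [this]
        refine .of_dotProduct_mulVec_nonneg ?_ fun x => by simpa using hUA x
        rw [Matrix.IsHermitian, conjTranspose_eq_transpose_of_trivial, transpose_sub, hUsym, hAsym]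
      · rw [hv]
        simp only [Prod.fst_add, Prod.snd_add]
        rw [add_mulVec, hAvec, mulVec_add]
        have hwh : w ⬝ᵥ (x₁ + x₂) = t := by
          rw [hwdot, mulVec_add, dotProduct_add, ht, hd, hw]
        rw [hwh, inv_mul_cancel₀ (ne_of_gt htpos), one_smul, hw, hUdef, sub_mulVec]
        abel
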